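/- For any r ∈ k, the deconcatenation coproduct Δ is multiplicative for the interpolated product: Δ(w₁ ∗_r w₂) = Δ(w₁) ∗_r Δ(w₂) for all words w₁, w₂, so (k⟨A⟩, ∗_r, Δ) is a bialgebra. -/

import Mathlib

set_option linter.unusedSectionVars false
set_option maxHeartbeats 1000000


/-!
Quasi-shuffle algebras (Hoffman–Ihara).  We model the span `kA` of the alphabet
(with its commutative associative product `⋄`, written `*` in `L`) as a
non-unital commutative `k`-algebra `L`, and the word algebra `k⟨A⟩` as the
tensor algebra `TensorAlgebra k L`, in which a word `a₁⋯aₙ` is the product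
`ι a₁ * ⋯ * ι aₙ`.
-/

open TensorAlgebra

variable (k : Type*) [Field k]
variable {L : Type*} [NonUnitalCommRing L] [Module k L]
  [SMulCommClass k L L] [IsScalarTower k L L]

/-- The word `a₁⋯aₙ` as an element of the tensor algebra. -/
def word (l : List L) : TensorAlgebra k L := (l.map fun a => TensorAlgebra.ι k a).prod

/-- The `⋄`-product of the letters of a nonempty block (junk value `0` on `[]`). -/
def blockProd : List L → L
  | [] => 0
  | a :: t => t.foldl (· * ·) a

/-- The Hoffman–Ihara operator `Ψ_f` on words, for `f = c₁t + c₂t² + ⋯`: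
`Ψ_f(w) = Σ_{(i₁,…,i_m) composition of ℓ(w)} c_{i₁}⋯c_{i_m} I[w]`,
written via the recursion on the first block. -/
def psi (c : ℕ → k) : List L → TensorAlgebra k L
  | [] => 1
  | a :: w => ∑ j ∈ Finset.range (w.length + 1),
      c (j + 1) • (TensorAlgebra.ι k (blockProd (a :: w.take j)) * psi c (w.drop j))
  termination_by l => l.length
  decreasing_by simp [List.length_drop] <;> omega

section Aux

omit [SMulCommClass k L L] [IsScalarTower k L L] in
lemma word_nil : word k ([] : List L) = 1 := rfl

omit [SMulCommClass k L L] [IsScalarTower k L L] in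
lemma word_cons (a : L) (u : List L) :
    word k (a :: u) = TensorAlgebra.ι k a * word k u := by
  simp [word]

omit [SMulCommClass k L L] [IsScalarTower k L L] in
lemma word_append (u v : List L) : word k (u ++ v) = word k u * word k v := by
  simp [word, List.prod_append]

lemma span_word_top :
    Submodule.span k (Set.range (word k : List L → TensorAlgebra k L)) = ⊤ := by
  rw [eq_top_iff]
  rintro x -
  induction x using TensorAlgebra.induction with
  | algebraMap r =>
      rw [Algebra.algebraMap_eq_smul_one, ← word_nil k]
      exact Submodule.smul_mem _ _ (Submodule.subset_span ⟨[], rfl⟩)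
  | ι a =>
      have : TensorAlgebra.ι k a = word k [a] := by simp [word]
      rw [this]; exact Submodule.subset_span ⟨[a], rfl⟩
  | mul x y hx hy =>
      have key : ∀ u : List L, ∀ y ∈ Submodule.span k (Set.range (word k : List L → TensorAlgebra k L)),
          word k u * y ∈ Submodule.span k (Set.range (word k : List L → TensorAlgebra k L)) := by
        intro u y hy
        induction hy using Submodule.span_induction with
        | mem z hz => obtain ⟨v, rfl⟩ := hz; rw [← word_append]; exact Submodule.subset_span ⟨u ++ v, rfl⟩
        | zero => simp
        | add a b _ _ ha hb => rw [mul_add]; exact Submodule.add_mem _ ha hb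
        | smul c a _ ha => rw [mul_smul_comm]; exact Submodule.smul_mem _ _ ha
      induction hx using Submodule.span_induction with
      | mem z hz => obtain ⟨v, rfl⟩ := hz; exact key v y hy
      | zero => simp
      | add a b _ _ ha hb => rw [add_mul]; exact Submodule.add_mem _ ha hb
      | smul c a _ ha => rw [smul_mul_assoc]; exact Submodule.smul_mem _ _ ha
  | add x y hx hy => exact Submodule.add_mem _ hx hy

lemma ext_word {M : Type*} [AddCommMonoid M] [Module k M]
    (f g : TensorAlgebra k L →ₗ[k] M) (h : ∀ w : List L, f (word k w) = g (word k w)) :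
    f = g :=
  LinearMap.ext_on (span_word_top k) (by rintro _ ⟨w, rfl⟩; exact h w)

open TensorProduct in
lemma span_word_tmul_top :
    Submodule.span k {z : TensorAlgebra k L ⊗[k] TensorAlgebra k L |
      ∃ (u : List L) (y : TensorAlgebra k L), z = word k u ⊗ₜ[k] y} = ⊤ := by
  rw [eq_top_iff]
  rintro z -
  induction z using TensorProduct.induction_on with
  | zero => exact Submodule.zero_mem _
  | add a b ha hb => exact Submodule.add_mem _ ha hb
  | tmul x y =>
      have hx : x ∈ Submodule.span k (Set.range (word k : List L → TensorAlgebra k L)) := by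
        rw [span_word_top]; trivial
      induction hx using Submodule.span_induction with
      | mem z hz => obtain ⟨u, rfl⟩ := hz; exact Submodule.subset_span ⟨u, y, rfl⟩
      | zero => rw [TensorProduct.zero_tmul]; exact Submodule.zero_mem _
      | add a b _ _ ha hb => rw [TensorProduct.add_tmul]; exact Submodule.add_mem _ ha hb
      | smul c a _ ha => rw [← TensorProduct.smul_tmul']; exact Submodule.smul_mem _ _ ha

open TensorProduct in
lemma ext_word2 {M : Type*} [AddCommMonoid M] [Module k M]
    (f g : TensorAlgebra k L ⊗[k] TensorAlgebra k L →ₗ[k] M)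
    (h : ∀ (u : List L) (y : TensorAlgebra k L), f (word k u ⊗ₜ[k] y) = g (word k u ⊗ₜ[k] y)) :
    f = g :=
  LinearMap.ext_on (span_word_tmul_top k) (by rintro _ ⟨u, y, rfl⟩; exact h u y)

open TensorProduct in
/-- Left multiplication by `ι c` on the first tensor factor. -/
noncomputable def opF (c : L) :
    (TensorAlgebra k L ⊗[k] TensorAlgebra k L) →ₗ[k] (TensorAlgebra k L ⊗[k] TensorAlgebra k L) :=
  LinearMap.rTensor _ (LinearMap.mulLeft k (TensorAlgebra.ι k c))

end Aux

open TensorProduct in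
/--
For the interpolated product `∗_r` (the `k`-bilinear product
`mr` with unit `1` satisfying the interpolated quasi-shuffle recursion), the
deconcatenation coproduct `Δ` is multiplicative:
`Δ(w₁ ∗_r w₂) = Δ(w₁) ∗_r Δ(w₂)`, where the tensor square carries the
componentwise product `∗_r`; so `(k⟨A⟩, ∗_r, Δ)` is a bialgebra.
-/
theorem stmt10 (r : k)
    (D : L → TensorAlgebra k L →ₗ[k] TensorAlgebra k L)
    (hD1 : ∀ a : L, D a 1 = 0)
    (hDw : ∀ (a c : L) (u : List L),
      D a (TensorAlgebra.ι k c * word k u) = TensorAlgebra.ι k (a * c) * word k u)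
    (mr : TensorAlgebra k L →ₗ[k] TensorAlgebra k L →ₗ[k] TensorAlgebra k L)
    (hmrl : ∀ x, mr 1 x = x) (hmrr : ∀ x, mr x 1 = x)
    (hmrrec : ∀ (a b : L) (v w : List L),
      mr (word k (a :: v)) (word k (b :: w))
        = TensorAlgebra.ι k a * mr (word k v) (word k (b :: w))
          + TensorAlgebra.ι k b * mr (word k (a :: v)) (word k w)
          + (1 - 2 * r) • (TensorAlgebra.ι k (a * b) * mr (word k v) (word k w))
          + (r ^ 2 - r) • D (a * b) (mr (word k v) (word k w)))
    (Δ : TensorAlgebra k L →ₗ[k] TensorAlgebra k L ⊗[k] TensorAlgebra k L)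
    (hΔ : ∀ w : List L,
      Δ (word k w) = ∑ i ∈ Finset.range (w.length + 1),
        word k (w.take i) ⊗ₜ[k] word k (w.drop i))
    (mrT : TensorAlgebra k L ⊗[k] TensorAlgebra k L →ₗ[k]
      TensorAlgebra k L ⊗[k] TensorAlgebra k L →ₗ[k]
      TensorAlgebra k L ⊗[k] TensorAlgebra k L)
    (hmrT : ∀ x₁ x₂ y₁ y₂ : TensorAlgebra k L,
      mrT (x₁ ⊗ₜ[k] x₂) (y₁ ⊗ₜ[k] y₂) = mr x₁ y₁ ⊗ₜ[k] mr x₂ y₂) :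
    ∀ x y : TensorAlgebra k L, Δ (mr x y) = mrT (Δ x) (Δ y) := by
  classical
  have hΔ1 : Δ (1 : TensorAlgebra k L) = (1 : TensorAlgebra k L) ⊗ₜ[k] (1 : TensorAlgebra k L) := by
    rw [← word_nil k]
    simpa [word_nil] using hΔ []
  -- Δ(ι a * z) = 1 ⊗ (ι a * z) + opF a (Δ z)
  have E : ∀ (a : L) (z : TensorAlgebra k L),
      Δ (TensorAlgebra.ι k a * z)
        = (1 : TensorAlgebra k L) ⊗ₜ[k] (TensorAlgebra.ι k a * z) + opF k a (Δ z) := by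
    intro a
    have h := ext_word k
      (Δ ∘ₗ LinearMap.mulLeft k (TensorAlgebra.ι k a))
      ((TensorProduct.mk k _ _ 1) ∘ₗ LinearMap.mulLeft k (TensorAlgebra.ι k a)
        + (opF k a) ∘ₗ Δ) ?_
    · intro z
      simpa only [LinearMap.comp_apply, LinearMap.add_apply, TensorProduct.mk_apply,
        LinearMap.mulLeft_apply] using LinearMap.congr_fun h z
    · intro w
      simp only [LinearMap.comp_apply, LinearMap.add_apply, TensorProduct.mk_apply,
        LinearMap.mulLeft_apply]
      rw [← word_cons, hΔ, hΔ]
      rw [show (a :: w).length = w.length + 1 from rfl, Finset.sum_range_succ']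
      simp only [List.take_succ_cons, List.drop_succ_cons, List.take_zero, List.drop_zero,
        word_nil, word_cons, opF, map_sum, LinearMap.rTensor_tmul, LinearMap.mulLeft_apply]
      rw [add_comm]
  -- peeling lemma for Δ on a cons word
  have hpeel : ∀ (g : L) (u : List L),
      Δ (word k (g :: u)) = (1 : TensorAlgebra k L) ⊗ₜ[k] word k (g :: u)
        + ∑ i ∈ Finset.range (u.length + 1),
            word k (g :: u.take i) ⊗ₜ[k] word k (u.drop i) := by
    intro g u
    rw [hΔ, show (g :: u).length = u.length + 1 from rfl, Finset.sum_range_succ']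
    simp only [List.take_succ_cons, List.drop_succ_cons, List.take_zero, List.drop_zero,
      word_nil]
    rw [add_comm]
  -- Δ(D c z) = 1 ⊗ (D c z) + rTensor (D c) (Δ z)
  have FD : ∀ (c : L) (z : TensorAlgebra k L),
      Δ (D c z) = (1 : TensorAlgebra k L) ⊗ₜ[k] (D c z)
        + LinearMap.rTensor (TensorAlgebra k L) (D c) (Δ z) := by
    intro c
    have h := ext_word k
      (Δ ∘ₗ D c)
      ((TensorProduct.mk k _ _ 1) ∘ₗ D c
        + (LinearMap.rTensor (TensorAlgebra k L) (D c)) ∘ₗ Δ) ?_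
    · intro z
      simpa only [LinearMap.comp_apply, LinearMap.add_apply, TensorProduct.mk_apply]
        using LinearMap.congr_fun h z
    · intro w
      simp only [LinearMap.comp_apply, LinearMap.add_apply, TensorProduct.mk_apply]
      match w with
      | [] =>
          rw [word_nil, hD1, hΔ1, map_zero]
          simp [hD1]
      | e :: u =>
          have hDe : ∀ v : List L, D c (word k (e :: v)) = word k ((c * e) :: v) := by
            intro v; rw [word_cons, hDw, ← word_cons]
          rw [hDe, hpeel, hpeel, map_add, map_sum, LinearMap.rTensor_tmul, hD1,
            TensorProduct.zero_tmul, zero_add]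
          congr 1
          refine Finset.sum_congr rfl fun i _ => ?_
          rw [LinearMap.rTensor_tmul, hDe]
  -- units for mrT
  have G1 : ∀ t, mrT ((1 : TensorAlgebra k L) ⊗ₜ[k] (1 : TensorAlgebra k L)) t = t := by
    intro t
    induction t using TensorProduct.induction_on with
    | zero => simp
    | add a b ha hb => rw [map_add, ha, hb]
    | tmul x y => rw [hmrT, hmrl, hmrl]
  have G2 : ∀ t, mrT t ((1 : TensorAlgebra k L) ⊗ₜ[k] (1 : TensorAlgebra k L)) = t := by
    intro t
    induction t using TensorProduct.induction_on with
    | zero => simp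
    | add a b ha hb => rw [map_add, LinearMap.add_apply, ha, hb]
    | tmul x y => rw [hmrT, hmrr, hmrr]
  -- commutation of mrT with opF against units
  have I2 : ∀ (b : L) (x : TensorAlgebra k L) (t : TensorAlgebra k L ⊗[k] TensorAlgebra k L),
      mrT ((1 : TensorAlgebra k L) ⊗ₜ[k] x) (opF k b t)
        = opF k b (mrT ((1 : TensorAlgebra k L) ⊗ₜ[k] x) t) := by
    intro b x t
    induction t using TensorProduct.induction_on with
    | zero => simp
    | add a c ha hc => simp only [map_add, ha, hc]
    | tmul p q =>
        simp only [opF, LinearMap.rTensor_tmul, LinearMap.mulLeft_apply, hmrT, hmrl]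
  have I3 : ∀ (a : L) (y : TensorAlgebra k L) (s : TensorAlgebra k L ⊗[k] TensorAlgebra k L),
      mrT (opF k a s) ((1 : TensorAlgebra k L) ⊗ₜ[k] y)
        = opF k a (mrT s ((1 : TensorAlgebra k L) ⊗ₜ[k] y)) := by
    intro a y s
    induction s using TensorProduct.induction_on with
    | zero => simp
    | add c d hc hd => simp only [map_add, LinearMap.add_apply, hc, hd]
    | tmul p q =>
        simp only [opF, LinearMap.rTensor_tmul, LinearMap.mulLeft_apply, hmrT, hmrr]
  -- the key quasi-shuffle compatibility on the tensor square
  have I4 : ∀ (a b : L) (s t : TensorAlgebra k L ⊗[k] TensorAlgebra k L),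
      mrT (opF k a s) (opF k b t)
        = opF k a (mrT s (opF k b t)) + opF k b (mrT (opF k a s) t)
          + (1 - 2 * r) • (opF k (a * b) (mrT s t))
          + (r ^ 2 - r) • (LinearMap.rTensor (TensorAlgebra k L) (D (a * b)) (mrT s t)) := by
    intro a b
    have h : (mrT.compl₁₂ (opF k a) (opF k b))
        = ((mrT.compl₁₂ LinearMap.id (opF k b)).compr₂ (opF k a))
          + ((mrT.compl₁₂ (opF k a) LinearMap.id).compr₂ (opF k b))
          + (1 - 2 * r) • (mrT.compr₂ (opF k (a * b)))
          + (r ^ 2 - r) • (mrT.compr₂ (LinearMap.rTensor (TensorAlgebra k L) (D (a * b)))) := by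
      refine ext_word2 k _ _ fun u x => ext_word2 k _ _ fun v y => ?_
      simp only [LinearMap.compl₁₂_apply, LinearMap.compr₂_apply, LinearMap.add_apply,
        LinearMap.smul_apply, LinearMap.id_apply, opF, LinearMap.rTensor_tmul,
        LinearMap.mulLeft_apply]
      simp only [← word_cons, hmrT, hmrrec a b u v]
      simp only [TensorProduct.add_tmul, TensorProduct.smul_tmul', LinearMap.rTensor_tmul,
        LinearMap.mulLeft_apply]
    intro s t
    have := LinearMap.congr_fun (LinearMap.congr_fun h s) t
    simpa only [LinearMap.compl₁₂_apply, LinearMap.compr₂_apply, LinearMap.add_apply,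
      LinearMap.smul_apply, LinearMap.id_apply] using this
  -- the main statement on words, by induction on total length
  have hmain : ∀ (n : ℕ) (u w : List L), u.length + w.length ≤ n →
      Δ (mr (word k u) (word k w)) = mrT (Δ (word k u)) (Δ (word k w)) := by
    intro n
    induction n with
    | zero =>
        intro u w h
        match u, w with
        | [], [] => rw [word_nil, hmrl, hΔ1, G1]
        | a :: v, w => simp at h
        | [], b :: w => simp at h
    | succ n ih =>
        intro u w h
        match u, w with
        | [], w => rw [word_nil, hmrl, hΔ1, G1]
        | a :: v, [] => rw [word_nil, hmrr, hΔ1, G2]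
        | a :: v, b :: w' =>
            have h1 : v.length + (b :: w').length ≤ n := by simp at h ⊢; omega
            have h2 : (a :: v).length + w'.length ≤ n := by simp at h ⊢; omega
            have h3 : v.length + w'.length ≤ n := by simp at h ⊢; omega
            have hP := ih v (b :: w') h1
            have hQ := ih (a :: v) w' h2
            have hR := ih v w' h3
            have hU : Δ (word k (a :: v))
                = (1 : TensorAlgebra k L) ⊗ₜ[k] word k (a :: v) + opF k a (Δ (word k v)) := by
              rw [word_cons, E, ← word_cons]
            have hW : Δ (word k (b :: w'))
                = (1 : TensorAlgebra k L) ⊗ₜ[k] word k (b :: w') + opF k b (Δ (word k w')) := by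
              rw [word_cons, E, ← word_cons]
            have hUW : mrT ((1 : TensorAlgebra k L) ⊗ₜ[k] word k (a :: v))
                ((1 : TensorAlgebra k L) ⊗ₜ[k] word k (b :: w'))
                = (1 : TensorAlgebra k L) ⊗ₜ[k]
                    (TensorAlgebra.ι k a * mr (word k v) (word k (b :: w'))
                     + TensorAlgebra.ι k b * mr (word k (a :: v)) (word k w')
                     + (1 - 2 * r) • (TensorAlgebra.ι k (a * b) * mr (word k v) (word k w'))
                     + (r ^ 2 - r) • D (a * b) (mr (word k v) (word k w'))) := by
              rw [hmrT, hmrrec a b v w', show mr 1 1 = 1 from hmrl 1]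
            rw [hmrrec a b v w']
            simp only [map_add, map_smul]
            rw [E, E, E, FD]
            rw [hP, hQ, hR, hU, hW]
            simp only [map_add, LinearMap.add_apply, map_smul, LinearMap.smul_apply, smul_add]
            rw [I2, I3, I4, hUW]
            simp only [TensorProduct.tmul_add, TensorProduct.tmul_smul, smul_add]
            abel
  -- reduce general x y to words
  have hbil : mr.compr₂ Δ = mrT.compl₁₂ Δ Δ := by
    refine ext_word k _ _ fun u => ext_word k _ _ fun w => ?_
    simp only [LinearMap.compr₂_apply, LinearMap.compl₁₂_apply]
    exact hmain (u.length + w.length) u w le_rfl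
  intro x y
  have := LinearMap.congr_fun (LinearMap.congr_fun hbil x) y
  simpa only [LinearMap.compr₂_apply, LinearMap.compl₁₂_apply] using this
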